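/- For a semigroup S, the property of having rational word problem is independent of the choice of finite generating set: if ι(S,A) is rational for some finite generating set A of S, then ι(S,B) is rational for every finite generating set B of S. -/

import Mathlib

/-- The monoid homomorphism `(A ⊕ A)* → A* × A*` sending `inl a ↦ (a, ε)` and
`inr a ↦ (ε, a)`, used to define rational (asynchronous two-tape) relations. -/
def twoTapeHom (A : Type) : FreeMonoid (A ⊕ A) →* FreeMonoid A × FreeMonoid A :=
  FreeMonoid.lift (Sum.elim (fun a => (FreeMonoid.of a, 1)) (fun a => (1, FreeMonoid.of a)))

/-- A relation `R ⊆ A* × A*` is rational if it is the image of a regular language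
over the alphabet `A ⊕ A` under `twoTapeHom`; equivalently, it is recognised by a
two-tape asynchronous finite automaton. -/
def IsRationalRel {A : Type} (R : Set (FreeMonoid A × FreeMonoid A)) : Prop :=
  ∃ L : Language (A ⊕ A), L.IsRegular ∧
    twoTapeHom A '' {w : FreeMonoid (A ⊕ A) | w.toList ∈ L} = R

/-- The canonical embedding of the free semigroup `A⁺` into the free monoid `A*`. -/
def freeSemigroupToWord {A : Type} : FreeSemigroup A →ₙ* FreeMonoid A :=
  FreeSemigroup.lift FreeMonoid.of

/-- The two-tape word problem `ι(S,A)` of a semigroup `S` with respect to a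
(generating) map `f : A → S`: all pairs of nonempty words over `A` whose images
in `S` coincide, viewed as a relation on words in `A*`. -/
def wordProblem {A S : Type} [Semigroup S] (f : A → S) :
    Set (FreeMonoid A × FreeMonoid A) :=
  {p | ∃ w₁ w₂ : FreeSemigroup A,
        FreeSemigroup.lift f w₁ = FreeSemigroup.lift f w₂ ∧
        p = (freeSemigroupToWord w₁, freeSemigroupToWord w₂)}

/-- A semigroup has rational word problem if it is generated by some finite set `A`
(i.e. there is `f : A → S` with the induced homomorphism `A⁺ → S` surjective) for
which the two-tape word problem is a rational relation. -/
def HasRationalWordProblem (S : Type) [Semigroup S] : Prop :=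
  ∃ (A : Type) (_ : Fintype A) (f : A → S),
    Function.Surjective ⇑(FreeSemigroup.lift f) ∧ IsRationalRel (wordProblem f)


namespace WordProblemAux

open List


open List

variable {α β σ τ : Type}

/-! ### Product DFA : intersection of regular languages -/

def prodDFA (M : DFA α σ) (N : DFA α τ) : DFA α (σ × τ) where
  step p a := (M.step p.1 a, N.step p.2 a)
  start := (M.start, N.start)
  accept := {p | p.1 ∈ M.accept ∧ p.2 ∈ N.accept}

theorem prodDFA_evalFrom (M : DFA α σ) (N : DFA α τ) (w : List α) :
    ∀ s t, (prodDFA M N).evalFrom (s, t) w = (M.evalFrom s w, N.evalFrom t w) := by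
  induction w with
  | nil => intro s t; rfl
  | cons a w ih => intro s t; exact ih _ _

theorem isRegular_and {L₁ L₂ : Language α} (h₁ : L₁.IsRegular) (h₂ : L₂.IsRegular) :
    Language.IsRegular {w | w ∈ L₁ ∧ w ∈ L₂} := by
  obtain ⟨σ₁, f₁, M, hM⟩ := h₁
  obtain ⟨σ₂, f₂, N, hN⟩ := h₂
  refine ⟨σ₁ × σ₂, inferInstance, prodDFA M N, ?_⟩
  ext w
  have := prodDFA_evalFrom M N w M.start N.start
  simp only [DFA.mem_accepts, DFA.eval, prodDFA] at *
  rw [this]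
  constructor
  · rintro ⟨hw1, hw2⟩
    exact ⟨by rw [← hM]; exact hw1, by rw [← hN]; exact hw2⟩
  · rintro ⟨hw1, hw2⟩
    rw [← hM] at hw1; rw [← hN] at hw2; exact ⟨hw1, hw2⟩

/-! ### Preimage under letter-to-letter-or-erasing maps -/

def comapDFA (h : α → Option β) (M : DFA β σ) : DFA α σ where
  step s a := match h a with
    | some b => M.step s b
    | none => s
  start := M.start
  accept := M.accept

theorem comapDFA_evalFrom (h : α → Option β) (M : DFA β σ) (w : List α) :
    ∀ s, (comapDFA h M).evalFrom s w = M.evalFrom s (w.filterMap h) := by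
  induction w with
  | nil => intro s; rfl
  | cons a w ih =>
    intro s
    rcases hc : h a with _ | b
    · rw [List.filterMap_cons_none hc]
      have : (comapDFA h M).step s a = s := by simp [comapDFA, hc]
      show (comapDFA h M).evalFrom ((comapDFA h M).step s a) w = _
      rw [this, ih]
    · rw [List.filterMap_cons_some hc]
      have : (comapDFA h M).step s a = M.step s b := by simp [comapDFA, hc]
      show (comapDFA h M).evalFrom ((comapDFA h M).step s a) w = _
      rw [this, ih]
      rfl

theorem isRegular_comap (h : α → Option β) {L : Language β} (hL : L.IsRegular) :
    Language.IsRegular {w : List α | w.filterMap h ∈ L} := by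
  obtain ⟨σ₁, f₁, M, hM⟩ := hL
  refine ⟨σ₁, f₁, comapDFA h M, ?_⟩
  ext w
  rw [DFA.mem_accepts, DFA.eval, comapDFA_evalFrom]
  show w.filterMap h ∈ M.accepts ↔ _
  rw [hM]
  rfl

/-! ### Image under letter-to-letter-or-erasing maps -/

def imageNFA (q : α → Option β) (M : DFA α σ) : NFA β σ where
  step s b := {t | ∃ z : List α, z.filterMap q = [b] ∧ M.evalFrom s z = t}
  start := {M.start}
  accept := {s | ∃ z : List α, z.filterMap q = [] ∧ M.evalFrom s z ∈ M.accept}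

theorem nfa_evalFrom_mono (N : NFA β σ) (w : List β) :
    ∀ {S T : Set σ}, S ⊆ T → N.evalFrom S w ⊆ N.evalFrom T w := by
  induction w with
  | nil => intro S T h; exact h
  | cons b w ih =>
    intro S T h
    refine ih ?_
    intro t ht
    rw [NFA.mem_stepSet] at ht ⊢
    obtain ⟨s, hs, hts⟩ := ht
    exact ⟨s, h hs, hts⟩

theorem imageNFA_sound (q : α → Option β) (M : DFA α σ) (w : List β) :
    ∀ s₀ t, t ∈ (imageNFA q M).evalFrom {s₀} w →
      ∃ d : List α, d.filterMap q = w ∧ M.evalFrom s₀ d = t := by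
  induction w using List.reverseRecOn with
  | nil =>
    intro s₀ t ht
    rw [NFA.evalFrom_nil, Set.mem_singleton_iff] at ht
    exact ⟨[], rfl, ht.symm⟩
  | append_singleton w b ih =>
    intro s₀ t ht
    rw [NFA.evalFrom_append, NFA.evalFrom_singleton, NFA.mem_stepSet] at ht
    obtain ⟨s, hs, hts⟩ := ht
    obtain ⟨z, hz1, hz2⟩ := hts
    obtain ⟨d, hd1, hd2⟩ := ih s₀ s hs
    refine ⟨d ++ z, ?_, ?_⟩
    · rw [List.filterMap_append, hd1, hz1]
    · rw [DFA.evalFrom_of_append, hd2, hz2]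

theorem imageNFA_complete (q : α → Option β) (M : DFA α σ) (d : List α) :
    ∀ (t₀ : σ) (y : List α), y.filterMap q = [] →
      ∃ t ∈ (imageNFA q M).evalFrom {t₀} (d.filterMap q),
        ∃ z : List α, z.filterMap q = [] ∧ M.evalFrom t z = M.evalFrom t₀ (y ++ d) := by
  induction d with
  | nil =>
    intro t₀ y hy
    exact ⟨t₀, rfl, y, hy, by rw [List.append_nil]⟩
  | cons c d ih =>
    intro t₀ y hy
    rcases hc : q c with _ | b
    · rw [List.filterMap_cons_none hc]
      obtain ⟨t, ht, z, hz1, hz2⟩ := ih t₀ (y ++ [c]) (by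
        rw [List.filterMap_append, hy, List.nil_append, List.filterMap_cons_none hc]
        rfl)
      exact ⟨t, ht, z, hz1, by rw [hz2, List.append_assoc]; rfl⟩
    · rw [List.filterMap_cons_some hc]
      have hstep : M.evalFrom t₀ (y ++ [c]) ∈ (imageNFA q M).step t₀ b := by
        refine ⟨y ++ [c], ?_, rfl⟩
        rw [List.filterMap_append, hy, List.nil_append, List.filterMap_cons_some hc]
        rfl
      obtain ⟨t, ht, z, hz1, hz2⟩ := ih (M.evalFrom t₀ (y ++ [c])) [] rfl
      refine ⟨t, ?_, z, hz1, ?_⟩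
      · have hsub : ({M.evalFrom t₀ (y ++ [c])} : Set σ) ⊆ (imageNFA q M).stepSet {t₀} b := by
          intro x hx
          rw [Set.mem_singleton_iff] at hx
          rw [NFA.mem_stepSet]
          exact ⟨t₀, rfl, hx ▸ hstep⟩
        have : (imageNFA q M).evalFrom {t₀} (b :: d.filterMap q)
            = (imageNFA q M).evalFrom ((imageNFA q M).stepSet {t₀} b) (d.filterMap q) := rfl
        rw [this]
        exact nfa_evalFrom_mono _ _ hsub (by simpa using ht)
      · rw [hz2, List.nil_append, ← DFA.evalFrom_of_append]
        rw [List.append_assoc]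
        rfl

theorem imageNFA_accepts (q : α → Option β) (M : DFA α σ) :
    (imageNFA q M).accepts = {w | ∃ d ∈ M.accepts, d.filterMap q = w} := by
  ext w
  rw [NFA.mem_accepts]
  constructor
  · rintro ⟨t, htacc, ht⟩
    obtain ⟨d, hd1, hd2⟩ := imageNFA_sound q M w M.start t ht
    obtain ⟨z, hz1, hz2⟩ := htacc
    refine ⟨d ++ z, ?_, ?_⟩
    · rw [DFA.mem_accepts, DFA.eval, DFA.evalFrom_of_append, hd2]
      exact hz2
    · rw [List.filterMap_append, hd1, hz1, List.append_nil]
  · rintro ⟨d, hd, hdw⟩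
    obtain ⟨t, ht, z, hz1, hz2⟩ := imageNFA_complete q M d M.start [] rfl
    rw [List.nil_append] at hz2
    refine ⟨t, ⟨z, hz1, ?_⟩, hdw ▸ ht⟩
    rw [hz2]
    exact hd

theorem isRegular_image (q : α → Option β) {L : Language α} (hL : L.IsRegular) :
    Language.IsRegular {w : List β | ∃ d ∈ L, d.filterMap q = w} := by
  obtain ⟨σ₁, f₁, M, hM⟩ := hL
  refine ⟨Set σ₁, inferInstance, (imageNFA q M).toDFA, ?_⟩
  rw [NFA.toDFA_correct, imageNFA_accepts, hM]



open List

variable {A' B' : Type}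

/-- Encoding of a list of blocks: each block `b` is encoded as `inr b` followed by
the letters of `u b` tagged `inl`. -/
def encodeBlocks (u : B' → List A') (bs : List B') : List (A' ⊕ B') :=
  bs.flatMap fun b => Sum.inr b :: (u b).map Sum.inl

@[simp] theorem encodeBlocks_nil (u : B' → List A') : encodeBlocks u [] = [] := rfl

theorem encodeBlocks_cons (u : B' → List A') (b : B') (bs : List B') :
    encodeBlocks u (b :: bs) = Sum.inr b :: ((u b).map Sum.inl ++ encodeBlocks u bs) := by
  simp [encodeBlocks]

/-- The state set for the blocks DFA: suffixes of the `u b` (plus `[]`). -/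
def BlocksT (u : B' → List A') : Set (List A') := {l | l = [] ∨ ∃ b, l <:+ u b}

theorem blocksT_nil (u : B' → List A') : [] ∈ BlocksT u := Or.inl rfl

theorem blocksT_ub (u : B' → List A') (b : B') : u b ∈ BlocksT u :=
  Or.inr ⟨b, List.suffix_refl _⟩

theorem blocksT_tail (u : B' → List A') {a : A'} {r : List A'} (h : a :: r ∈ BlocksT u) :
    r ∈ BlocksT u := by
  rcases h with h | ⟨b, hb⟩
  · exact absurd h (List.cons_ne_nil a r)
  · exact Or.inr ⟨b, (List.suffix_cons a r).trans hb⟩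

theorem blocksT_finite [Fintype B'] (u : B' → List A') : (BlocksT u).Finite := by
  classical
  have : BlocksT u ⊆ ↑(insert ([] : List A')
      (Finset.univ.biUnion fun b : B' => (u b).tails.toFinset)) := by
    rintro l (h | ⟨b, hb⟩)
    · simp [h]
    · simp only [Finset.coe_insert, Set.mem_insert_iff, Finset.coe_biUnion,
        Finset.mem_coe, Finset.mem_univ, Set.mem_iUnion, List.mem_toFinset,
        List.mem_tails]
      exact Or.inr ⟨b, trivial, hb⟩
  exact Set.Finite.subset (Finset.finite_toSet _) this

open scoped Classical in
/-- Transition function of the blocks DFA. -/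
noncomputable def blocksStep (u : B' → List A') :
    Option ↥(BlocksT u) → (A' ⊕ B') → Option ↥(BlocksT u) := fun s c =>
  match s, c with
  | none, _ => none
  | some ⟨[], _⟩, Sum.inl _ => none
  | some ⟨[], _⟩, Sum.inr b => some ⟨u b, blocksT_ub u b⟩
  | some ⟨a' :: r, h⟩, Sum.inl a => if a' = a then some ⟨r, blocksT_tail u h⟩ else none
  | some ⟨_ :: _, _⟩, Sum.inr _ => none

noncomputable def blocksDFA (u : B' → List A') : DFA (A' ⊕ B') (Option ↥(BlocksT u)) where
  step := blocksStep u
  start := some ⟨[], blocksT_nil u⟩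
  accept := {some ⟨[], blocksT_nil u⟩}

theorem blocksDFA_evalFrom_none (u : B' → List A') (w : List (A' ⊕ B')) :
    (blocksDFA u).evalFrom none w = none := by
  induction w with
  | nil => rfl
  | cons c w ih =>
    show (blocksDFA u).evalFrom ((blocksDFA u).step none c) w = none
    have : (blocksDFA u).step none c = none := rfl
    rw [this, ih]

theorem blocksDFA_consume (u : B' → List A') (l : List A') :
    ∀ (h : l ∈ BlocksT u) (w : List (A' ⊕ B')),
      (blocksDFA u).evalFrom (some ⟨l, h⟩) (l.map Sum.inl ++ w)
        = (blocksDFA u).evalFrom (some ⟨[], blocksT_nil u⟩) w := by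
  induction l with
  | nil => intro h w; rfl
  | cons a l ih =>
    intro h w
    show (blocksDFA u).evalFrom ((blocksDFA u).step (some ⟨a :: l, h⟩) (Sum.inl a))
      (l.map Sum.inl ++ w) = _
    have hstep : (blocksDFA u).step (some ⟨a :: l, h⟩) (Sum.inl a)
        = some ⟨l, blocksT_tail u h⟩ := by
      simp [blocksDFA, blocksStep]
    rw [hstep, ih]

theorem blocksDFA_encode (u : B' → List A') (bs : List B') :
    (blocksDFA u).evalFrom (some ⟨[], blocksT_nil u⟩) (encodeBlocks u bs)
      = some ⟨[], blocksT_nil u⟩ := by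
  induction bs with
  | nil => rfl
  | cons b bs ih =>
    rw [encodeBlocks_cons]
    show (blocksDFA u).evalFrom
      ((blocksDFA u).step (some ⟨[], blocksT_nil u⟩) (Sum.inr b)) _ = _
    have hstep : (blocksDFA u).step (some ⟨[], blocksT_nil u⟩) (Sum.inr b)
        = some ⟨u b, blocksT_ub u b⟩ := rfl
    rw [hstep, blocksDFA_consume, ih]

theorem blocksDFA_complete (u : B' → List A') (w : List (A' ⊕ B')) :
    ∀ (l : List A') (h : l ∈ BlocksT u),
      (blocksDFA u).evalFrom (some ⟨l, h⟩) w = some ⟨[], blocksT_nil u⟩ →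
      ∃ bs, w = l.map Sum.inl ++ encodeBlocks u bs := by
  induction w with
  | nil =>
    intro l h hacc
    rw [DFA.evalFrom_nil] at hacc
    have : l = [] := congrArg (fun o => (Option.map Subtype.val o).getD []) hacc
    exact ⟨[], by simp [this]⟩
  | cons c w ih =>
    intro l h hacc
    have hacc' : (blocksDFA u).evalFrom ((blocksDFA u).step (some ⟨l, h⟩) c) w
        = some ⟨[], blocksT_nil u⟩ := hacc
    rcases l with _ | ⟨a', r⟩
    · rcases c with a | b
      · exfalso
        have : (blocksDFA u).step (some ⟨[], h⟩) (Sum.inl a) = none := rfl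
        rw [this, blocksDFA_evalFrom_none] at hacc'
        exact nomatch hacc'
      · have : (blocksDFA u).step (some ⟨[], h⟩) (Sum.inr b) = some ⟨u b, blocksT_ub u b⟩ := rfl
        rw [this] at hacc'
        obtain ⟨bs, hbs⟩ := ih (u b) (blocksT_ub u b) hacc'
        exact ⟨b :: bs, by rw [encodeBlocks_cons, hbs]; rfl⟩
    · rcases c with a | b
      · by_cases ha : a' = a
        · subst ha
          have : (blocksDFA u).step (some ⟨a' :: r, h⟩) (Sum.inl a')
              = some ⟨r, blocksT_tail u h⟩ := by
            simp [blocksDFA, blocksStep]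
          rw [this] at hacc'
          obtain ⟨bs, hbs⟩ := ih r (blocksT_tail u h) hacc'
          exact ⟨bs, by rw [List.map_cons, List.cons_append, hbs]⟩
        · exfalso
          have : (blocksDFA u).step (some ⟨a' :: r, h⟩) (Sum.inl a) = none := by
            simp [blocksDFA, blocksStep, ha]
          rw [this, blocksDFA_evalFrom_none] at hacc'
          exact nomatch hacc'
      · exfalso
        have : (blocksDFA u).step (some ⟨a' :: r, h⟩) (Sum.inr b) = none := rfl
        rw [this, blocksDFA_evalFrom_none] at hacc'
        exact nomatch hacc'

theorem blocksLang_regular [Fintype B'] (u : B' → List A') :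
    Language.IsRegular {w : List (A' ⊕ B') | ∃ bs, w = encodeBlocks u bs} := by
  haveI := (blocksT_finite u).fintype
  refine ⟨Option ↥(BlocksT u), inferInstance, blocksDFA u, ?_⟩
  ext w
  rw [DFA.mem_accepts]
  constructor
  · intro hw
    have : (blocksDFA u).evalFrom (some ⟨[], blocksT_nil u⟩) w
        = some ⟨[], blocksT_nil u⟩ := hw
    obtain ⟨bs, hbs⟩ := blocksDFA_complete u w [] (blocksT_nil u) this
    exact ⟨bs, by simpa using hbs⟩
  · rintro ⟨bs, rfl⟩
    exact Set.mem_singleton_iff.mpr (blocksDFA_encode u bs)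



open List

/-! ### Letter projections -/

def sumL {γ δ : Type} : γ ⊕ δ → Option γ := Sum.elim some fun _ => none
def sumR {γ δ : Type} : γ ⊕ δ → Option δ := Sum.elim (fun _ => none) some

@[simp] theorem sumL_inl {γ δ : Type} (a : γ) : (sumL (Sum.inl a : γ ⊕ δ)) = some a := rfl
@[simp] theorem sumL_inr {γ δ : Type} (d : δ) : (sumL (Sum.inr d : γ ⊕ δ)) = none := rfl
@[simp] theorem sumR_inl {γ δ : Type} (a : γ) : (sumR (Sum.inl a : γ ⊕ δ)) = none := rfl
@[simp] theorem sumR_inr {γ δ : Type} (d : δ) : (sumR (Sum.inr d : γ ⊕ δ)) = some d := rfl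

def projT1 {α β : Type} : (α ⊕ α) ⊕ (β ⊕ β) → Option (α ⊕ β)
  | .inl (.inl a) => some (.inl a)
  | .inr (.inl b) => some (.inr b)
  | _ => none

def projT2 {α β : Type} : (α ⊕ α) ⊕ (β ⊕ β) → Option (α ⊕ β)
  | .inl (.inr a) => some (.inl a)
  | .inr (.inr b) => some (.inr b)
  | _ => none



open List


theorem twoTapeHom_ofList (α : Type) (l : List (α ⊕ α)) :
    twoTapeHom α (FreeMonoid.ofList l)
      = (FreeMonoid.ofList (l.filterMap sumL), FreeMonoid.ofList (l.filterMap sumR)) := by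
  induction l with
  | nil => rfl
  | cons c l ih =>
    have hcons : FreeMonoid.ofList (c :: l) = FreeMonoid.of c * FreeMonoid.ofList l :=
      rfl
    rw [hcons, map_mul, ih]
    rcases c with a | a
    · show (FreeMonoid.of a, (1 : FreeMonoid α)) * _ = _
      rw [Prod.mk_mul_mk, one_mul]
      rfl
    · show ((1 : FreeMonoid α), FreeMonoid.of a) * _ = _
      rw [Prod.mk_mul_mk, one_mul]
      rfl

theorem twoTapeHom_toList (α : Type) (w : FreeMonoid (α ⊕ α)) :
    twoTapeHom α w
      = (FreeMonoid.ofList (w.toList.filterMap sumL),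
         FreeMonoid.ofList (w.toList.filterMap sumR)) :=
  twoTapeHom_ofList α w.toList


theorem toList_fstw {α : Type} (w : FreeSemigroup α) :
    (freeSemigroupToWord w).toList = w.head :: w.tail := by
  induction w using FreeSemigroup.recOnMul with
  | ih1 a => rfl
  | ih2 x y hx hy =>
    rw [map_mul, FreeMonoid.toList_mul, hx, hy, FreeSemigroup.head_mul, FreeSemigroup.tail_mul]
    rfl

theorem fstw_inj {α : Type} {w w' : FreeSemigroup α}
    (h : (freeSemigroupToWord w).toList = (freeSemigroupToWord w').toList) : w = w' := by
  rw [toList_fstw, toList_fstw] at h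
  cases w; cases w'
  simpa using h

theorem fstw_mk {α : Type} (a : α) (l : List α) :
    (freeSemigroupToWord (⟨a, l⟩ : FreeSemigroup α)).toList = a :: l :=
  toList_fstw _

/-! ### encode extraction (encodeBlocks copied signature) -/


theorem encode_filterMap_sumR {A' B' : Type} (u : B' → List A') (bs : List B') :
    (encodeBlocks u bs).filterMap sumR = bs := by
  induction bs with
  | nil => rfl
  | cons b bs ih =>
    show (Sum.inr b :: ((u b).map Sum.inl ++ encodeBlocks u bs)).filterMap sumR = _
    rw [List.filterMap_cons_some (by rfl), List.filterMap_append, ih]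
    have : ((u b).map Sum.inl).filterMap (sumR (γ := A') (δ := B')) = [] := by
      rw [List.filterMap_map]
      exact List.filterMap_eq_nil_iff.mpr fun a _ => rfl
    rw [this]
    rfl

theorem encode_filterMap_sumL {A' B' : Type} (u : B' → List A') (bs : List B') :
    (encodeBlocks u bs).filterMap sumL = bs.flatMap u := by
  induction bs with
  | nil => rfl
  | cons b bs ih =>
    show (Sum.inr b :: ((u b).map Sum.inl ++ encodeBlocks u bs)).filterMap sumL = _
    rw [List.filterMap_cons_none (by rfl), List.filterMap_append, ih]
    have : ((u b).map Sum.inl).filterMap (sumL (γ := A') (δ := B')) = u b := by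
      rw [List.filterMap_map]
      show (u b).filterMap (fun a => some a) = u b
      simp
    rw [this]
    rfl



open List

variable {A B : Type}

theorem flatMap_eq_nil_of {u : B → List A} (hne : ∀ b, u b ≠ []) {xs : List B}
    (h : xs.flatMap u = []) : xs = [] := by
  cases xs with
  | nil => rfl
  | cons b xs =>
    exfalso
    rw [List.flatMap_cons, List.append_eq_nil_iff] at h
    exact hne b h.1

def buildD (u : B → List A) :
    List (A ⊕ A) → List B → List A → List B → List A → List ((A ⊕ A) ⊕ (B ⊕ B))
  | [], _, _, _, _ => []
  | Sum.inl a :: v, xs, _ :: r1, ys, r2 => Sum.inl (Sum.inl a) :: buildD u v xs r1 ys r2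
  | Sum.inl a :: v, b :: xs, [], ys, r2 =>
      Sum.inr (Sum.inl b) :: Sum.inl (Sum.inl a) :: buildD u v xs (u b).tail ys r2
  | Sum.inl _ :: _, [], [], _, _ => []
  | Sum.inr a :: v, xs, r1, ys, _ :: r2 => Sum.inl (Sum.inr a) :: buildD u v xs r1 ys r2
  | Sum.inr a :: v, xs, r1, b :: ys, [] =>
      Sum.inr (Sum.inr b) :: Sum.inl (Sum.inr a) :: buildD u v xs r1 ys (u b).tail
  | Sum.inr _ :: _, _, _, [], [] => []

theorem buildD_spec (u : B → List A) (hne : ∀ b, u b ≠ []) :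
    ∀ (v : List (A ⊕ A)) (xs : List B) (r1 : List A) (ys : List B) (r2 : List A),
      v.filterMap sumL = r1 ++ xs.flatMap u →
      v.filterMap sumR = r2 ++ ys.flatMap u →
      (buildD u v xs r1 ys r2).filterMap sumL = v ∧
      (buildD u v xs r1 ys r2).filterMap projT1 = r1.map Sum.inl ++ encodeBlocks u xs ∧
      (buildD u v xs r1 ys r2).filterMap projT2 = r2.map Sum.inl ++ encodeBlocks u ys := by
  intro v
  induction v with
  | nil =>
    intro xs r1 ys r2 h1 h2
    rw [List.filterMap_nil] at h1 h2
    obtain ⟨hr1, hxs⟩ := (List.append_eq_nil_iff).mp h1.symm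
    obtain ⟨hr2, hys⟩ := (List.append_eq_nil_iff).mp h2.symm
    subst hr1; subst hr2
    rw [flatMap_eq_nil_of hne hxs, flatMap_eq_nil_of hne hys]
    exact ⟨rfl, rfl, rfl⟩
  | cons c v ih =>
    intro xs r1 ys r2 h1 h2
    rcases c with a | a
    · rw [List.filterMap_cons_some (show sumL (Sum.inl a : A ⊕ A) = some a from rfl)] at h1
      rw [List.filterMap_cons_none (show sumR (Sum.inl a : A ⊕ A) = none from rfl)] at h2
      rcases r1 with _ | ⟨a1, r1⟩
      · rcases xs with _ | ⟨b, xs⟩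
        · exact absurd h1 (by simp)
        · rw [List.nil_append, List.flatMap_cons] at h1
          rcases hub : u b with _ | ⟨a0, t⟩
          · exact absurd hub (hne b)
          rw [hub, List.cons_append, List.cons.injEq] at h1
          obtain ⟨rfl, h1'⟩ := h1
          have htail : (u b).tail = t := by rw [hub]; rfl
          obtain ⟨c1, c2, c3⟩ := ih xs (u b).tail ys r2 (by rw [htail]; exact h1') h2
          have hbd : buildD u (Sum.inl a :: v) (b :: xs) [] ys r2
              = Sum.inr (Sum.inl b) :: Sum.inl (Sum.inl a) :: buildD u v xs (u b).tail ys r2 := by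
            simp only [buildD]
          rw [hbd]
          refine ⟨?_, ?_, ?_⟩
          · rw [List.filterMap_cons_none (show sumL (Sum.inr (Sum.inl b) : (A⊕A)⊕(B⊕B)) = none from rfl),
              List.filterMap_cons_some (show sumL (Sum.inl (Sum.inl a) : (A⊕A)⊕(B⊕B)) = some (Sum.inl a) from rfl), c1]
          · rw [List.filterMap_cons_some (show projT1 (Sum.inr (Sum.inl b) : (A⊕A)⊕(B⊕B)) = some (Sum.inr b) from rfl),
              List.filterMap_cons_some (show projT1 (Sum.inl (Sum.inl a) : (A⊕A)⊕(B⊕B)) = some (Sum.inl a) from rfl),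
              c2, htail]
            rw [show encodeBlocks u (b :: xs) = Sum.inr b :: ((u b).map Sum.inl ++ encodeBlocks u xs)
              from by simp [encodeBlocks], hub]
            rfl
          · rw [List.filterMap_cons_none (show projT2 (Sum.inr (Sum.inl b) : (A⊕A)⊕(B⊕B)) = none from rfl),
              List.filterMap_cons_none (show projT2 (Sum.inl (Sum.inl a) : (A⊕A)⊕(B⊕B)) = none from rfl), c3]
      · rw [List.cons_append, List.cons.injEq] at h1
        obtain ⟨rfl, h1'⟩ := h1
        obtain ⟨c1, c2, c3⟩ := ih xs r1 ys r2 h1' h2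
        have hbd : buildD u (Sum.inl a :: v) xs (a :: r1) ys r2
            = Sum.inl (Sum.inl a) :: buildD u v xs r1 ys r2 := by
          simp only [buildD]
        rw [hbd]
        refine ⟨?_, ?_, ?_⟩
        · rw [List.filterMap_cons_some (show sumL (Sum.inl (Sum.inl a) : (A⊕A)⊕(B⊕B)) = some (Sum.inl a) from rfl), c1]
        · rw [List.filterMap_cons_some (show projT1 (Sum.inl (Sum.inl a) : (A⊕A)⊕(B⊕B)) = some (Sum.inl a) from rfl), c2]
          rfl
        · rw [List.filterMap_cons_none (show projT2 (Sum.inl (Sum.inl a) : (A⊕A)⊕(B⊕B)) = none from rfl), c3]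
    · rw [List.filterMap_cons_none (show sumL (Sum.inr a : A ⊕ A) = none from rfl)] at h1
      rw [List.filterMap_cons_some (show sumR (Sum.inr a : A ⊕ A) = some a from rfl)] at h2
      rcases r2 with _ | ⟨a2, r2⟩
      · rcases ys with _ | ⟨b, ys⟩
        · exact absurd h2 (by simp)
        · rw [List.nil_append, List.flatMap_cons] at h2
          rcases hub : u b with _ | ⟨a0, t⟩
          · exact absurd hub (hne b)
          rw [hub, List.cons_append, List.cons.injEq] at h2
          obtain ⟨rfl, h2'⟩ := h2
          have htail : (u b).tail = t := by rw [hub]; rfl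
          obtain ⟨c1, c2, c3⟩ := ih xs r1 ys (u b).tail h1 (by rw [htail]; exact h2')
          have hbd : buildD u (Sum.inr a :: v) xs r1 (b :: ys) []
              = Sum.inr (Sum.inr b) :: Sum.inl (Sum.inr a) :: buildD u v xs r1 ys (u b).tail := by
            simp only [buildD]
          rw [hbd]
          refine ⟨?_, ?_, ?_⟩
          · rw [List.filterMap_cons_none (show sumL (Sum.inr (Sum.inr b) : (A⊕A)⊕(B⊕B)) = none from rfl),
              List.filterMap_cons_some (show sumL (Sum.inl (Sum.inr a) : (A⊕A)⊕(B⊕B)) = some (Sum.inr a) from rfl), c1]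
          · rw [List.filterMap_cons_none (show projT1 (Sum.inr (Sum.inr b) : (A⊕A)⊕(B⊕B)) = none from rfl),
              List.filterMap_cons_none (show projT1 (Sum.inl (Sum.inr a) : (A⊕A)⊕(B⊕B)) = none from rfl), c2]
          · rw [List.filterMap_cons_some (show projT2 (Sum.inr (Sum.inr b) : (A⊕A)⊕(B⊕B)) = some (Sum.inr b) from rfl),
              List.filterMap_cons_some (show projT2 (Sum.inl (Sum.inr a) : (A⊕A)⊕(B⊕B)) = some (Sum.inl a) from rfl),
              c3, htail]
            rw [show encodeBlocks u (b :: ys) = Sum.inr b :: ((u b).map Sum.inl ++ encodeBlocks u ys)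
              from by simp [encodeBlocks], hub]
            rfl
      · rw [List.cons_append, List.cons.injEq] at h2
        obtain ⟨rfl, h2'⟩ := h2
        obtain ⟨c1, c2, c3⟩ := ih xs r1 ys r2 h1 h2'
        have hbd : buildD u (Sum.inr a :: v) xs r1 ys (a :: r2)
            = Sum.inl (Sum.inr a) :: buildD u v xs r1 ys r2 := by
          simp only [buildD]
        rw [hbd]
        refine ⟨?_, ?_, ?_⟩
        · rw [List.filterMap_cons_some (show sumL (Sum.inl (Sum.inr a) : (A⊕A)⊕(B⊕B)) = some (Sum.inr a) from rfl), c1]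
        · rw [List.filterMap_cons_none (show projT1 (Sum.inl (Sum.inr a) : (A⊕A)⊕(B⊕B)) = none from rfl), c2]
        · rw [List.filterMap_cons_some (show projT2 (Sum.inl (Sum.inr a) : (A⊕A)⊕(B⊕B)) = some (Sum.inl a) from rfl), c3]
          rfl


end WordProblemAux

open WordProblemAux in
/-- Having rational word problem is independent of the choice of finite generating
set: if the word problem of `S` is rational with respect to some finite generating
set, then it is rational with respect to every finite generating set. -/
theorem wordProblem_rational_independent_of_generating_set (S : Type) [Semigroup S]
    (A : Type) [Fintype A] (f : A → S)
    (hf : Function.Surjective ⇑(FreeSemigroup.lift f))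
    (hA : IsRationalRel (wordProblem f))
    (B : Type) [Fintype B] (g : B → S)
    (hg : Function.Surjective ⇑(FreeSemigroup.lift g)) :
    IsRationalRel (wordProblem g) := by
  classical
  obtain ⟨L, hLreg, hL⟩ := hA
  choose rep hrep using hf
  set u : B → List A := fun b => (freeSemigroupToWord (rep (g b))).toList with hu
  have hne : ∀ b, u b ≠ [] := by
    intro b
    rw [hu]
    show (freeSemigroupToWord (rep (g b))).toList ≠ []
    rw [toList_fstw]
    exact List.cons_ne_nil _ _
  set φ : FreeSemigroup B →ₙ* FreeSemigroup A :=
    FreeSemigroup.lift (fun b => rep (g b)) with hφ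
  have hφf : ∀ w, FreeSemigroup.lift f (φ w) = FreeSemigroup.lift g w := by
    intro w
    induction w using FreeSemigroup.recOnMul with
    | ih1 b =>
      rw [hφ, FreeSemigroup.lift_of, FreeSemigroup.lift_of]
      exact hrep (g b)
    | ih2 x y hx hy => rw [map_mul, map_mul, map_mul, hx, hy]
  have hφW : ∀ w : FreeSemigroup B,
      (freeSemigroupToWord (φ w)).toList = (freeSemigroupToWord w).toList.flatMap u := by
    intro w
    induction w using FreeSemigroup.recOnMul with
    | ih1 b =>
      rw [hφ, FreeSemigroup.lift_of]
      have : (freeSemigroupToWord (FreeSemigroup.of b)).toList = [b] := toList_fstw _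
      rw [this, List.flatMap_cons, List.flatMap_nil, List.append_nil]
    | ih2 x y hx hy =>
      simp only [map_mul, FreeMonoid.toList_mul, List.flatMap_append, hx, hy]
  -- core : transfer of word problem membership along φ
  have core : ∀ x y : List B,
      (FreeMonoid.ofList (x.flatMap u), FreeMonoid.ofList (y.flatMap u)) ∈ wordProblem f →
      (FreeMonoid.ofList x, FreeMonoid.ofList y) ∈ wordProblem g := by
    rintro x y ⟨v₁, v₂, hv, hpair⟩
    rw [Prod.mk.injEq] at hpair
    obtain ⟨hp1, hp2⟩ := hpair
    have ht1 : x.flatMap u = (freeSemigroupToWord v₁).toList := congrArg FreeMonoid.toList hp1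
    have ht2 : y.flatMap u = (freeSemigroupToWord v₂).toList := congrArg FreeMonoid.toList hp2
    rcases hx : x with _ | ⟨b0, x'⟩
    · exfalso
      rw [hx, List.flatMap_nil, toList_fstw] at ht1
      exact nomatch ht1
    rcases hy : y with _ | ⟨b1, y'⟩
    · exfalso
      rw [hy, List.flatMap_nil, toList_fstw] at ht2
      exact nomatch ht2
    subst hx; subst hy
    set w₁ : FreeSemigroup B := ⟨b0, x'⟩
    set w₂ : FreeSemigroup B := ⟨b1, y'⟩
    have hw1 : (freeSemigroupToWord w₁).toList = b0 :: x' := toList_fstw _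
    have hw2 : (freeSemigroupToWord w₂).toList = b1 :: y' := toList_fstw _
    have hφ1 : φ w₁ = v₁ := by
      apply fstw_inj
      rw [hφW, hw1, ← ht1]
    have hφ2 : φ w₂ = v₂ := by
      apply fstw_inj
      rw [hφW, hw2, ← ht2]
    refine ⟨w₁, w₂, ?_, ?_⟩
    · rw [← hφf, ← hφf, hφ1, hφ2]
      exact hv
    · rw [Prod.mk.injEq]
      constructor
      · rw [← hw1]
        exact (FreeMonoid.ofList_toList _).symm
      · rw [← hw2]
        exact (FreeMonoid.ofList_toList _).symm
  -- function identities on the combined alphabet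
  have FE1 : (fun c : (A ⊕ A) ⊕ (B ⊕ B) => (sumR c).bind sumL)
      = fun c => (projT1 c).bind sumR := by
    funext c; rcases c with (a | a) | (b | b) <;> rfl
  have FE2 : (fun c : (A ⊕ A) ⊕ (B ⊕ B) => (sumR c).bind sumR)
      = fun c => (projT2 c).bind sumR := by
    funext c; rcases c with (a | a) | (b | b) <;> rfl
  have FE3 : (fun c : (A ⊕ A) ⊕ (B ⊕ B) => (projT1 c).bind sumL)
      = fun c => (sumL c).bind sumL := by
    funext c; rcases c with (a | a) | (b | b) <;> rfl
  have FE4 : (fun c : (A ⊕ A) ⊕ (B ⊕ B) => (projT2 c).bind sumL)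
      = fun c => (sumL c).bind sumR := by
    funext c; rcases c with (a | a) | (b | b) <;> rfl
  -- the new regular language
  refine ⟨{w : List (B ⊕ B) | ∃ d : List ((A ⊕ A) ⊕ (B ⊕ B)),
      (d.filterMap sumL ∈ L ∧
        (d.filterMap projT1 ∈ {l | ∃ bs, l = encodeBlocks u bs}) ∧
        (d.filterMap projT2 ∈ {l | ∃ bs, l = encodeBlocks u bs})) ∧
      d.filterMap sumR = w}, ?_, ?_⟩
  · have h1 := isRegular_comap (sumL : (A ⊕ A) ⊕ (B ⊕ B) → Option (A ⊕ A)) hLreg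
    have h2 := isRegular_comap (projT1 : (A ⊕ A) ⊕ (B ⊕ B) → Option (A ⊕ B))
      (blocksLang_regular u)
    have h3 := isRegular_comap (projT2 : (A ⊕ A) ⊕ (B ⊕ B) → Option (A ⊕ B))
      (blocksLang_regular u)
    have hK := isRegular_and h1 (isRegular_and h2 h3)
    exact isRegular_image (sumR : (A ⊕ A) ⊕ (B ⊕ B) → Option (B ⊕ B)) hK
  · ext p
    constructor
    · rintro ⟨w, hw, rfl⟩
      obtain ⟨d, ⟨hdV, ⟨bs1, hbs1⟩, ⟨bs2, hbs2⟩⟩, hdW⟩ := hw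
      rw [twoTapeHom_toList]
      set x := w.toList.filterMap sumL with hxdef
      set y := w.toList.filterMap sumR with hydef
      set v := d.filterMap (sumL : (A ⊕ A) ⊕ (B ⊕ B) → Option (A ⊕ A)) with hvdef
      have hx : x = bs1 := by
        rw [hxdef, ← hdW, List.filterMap_filterMap, FE1, ← List.filterMap_filterMap,
          hbs1, encode_filterMap_sumR]
      have hy : y = bs2 := by
        rw [hydef, ← hdW, List.filterMap_filterMap, FE2, ← List.filterMap_filterMap,
          hbs2, encode_filterMap_sumR]
      have hfx : v.filterMap sumL = x.flatMap u := by
        rw [hvdef, hx, ← encode_filterMap_sumL u bs1, ← hbs1, List.filterMap_filterMap,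
          List.filterMap_filterMap, FE3]
      have hfy : v.filterMap sumR = y.flatMap u := by
        rw [hvdef, hy, ← encode_filterMap_sumL u bs2, ← hbs2, List.filterMap_filterMap,
          List.filterMap_filterMap, FE4]
      have hvL : (FreeMonoid.ofList v : FreeMonoid (A ⊕ A)) ∈
          {w : FreeMonoid (A ⊕ A) | w.toList ∈ L} := hdV
      have hmem : twoTapeHom A (FreeMonoid.ofList v) ∈ wordProblem f := by
        rw [← hL]
        exact ⟨FreeMonoid.ofList v, hvL, rfl⟩
      rw [twoTapeHom_ofList, hfx, hfy] at hmem
      exact core x y hmem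
    · rintro ⟨w₁, w₂, hgeq, rfl⟩
      set x := (freeSemigroupToWord w₁).toList with hxdef
      set y := (freeSemigroupToWord w₂).toList with hydef
      have pairf : (FreeMonoid.ofList (x.flatMap u), FreeMonoid.ofList (y.flatMap u))
          ∈ wordProblem f := by
        refine ⟨φ w₁, φ w₂, by rw [hφf, hφf]; exact hgeq, ?_⟩
        rw [Prod.mk.injEq]
        constructor
        · rw [← hφW w₁]
          exact (FreeMonoid.ofList_toList _).symm
        · rw [← hφW w₂]
          exact (FreeMonoid.ofList_toList _).symm
      rw [← hL] at pairf
      obtain ⟨vm, hvm, hvt⟩ := pairf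
      rw [twoTapeHom_toList, Prod.mk.injEq] at hvt
      obtain ⟨hvt1, hvt2⟩ := hvt
      have hv1 : vm.toList.filterMap sumL = x.flatMap u := congrArg FreeMonoid.toList hvt1
      have hv2 : vm.toList.filterMap sumR = y.flatMap u := congrArg FreeMonoid.toList hvt2
      obtain ⟨c1, c2, c3⟩ := buildD_spec u hne vm.toList x [] y []
        (by rw [hv1, List.nil_append]) (by rw [hv2, List.nil_append])
      rw [List.map_nil, List.nil_append] at c2 c3
      set d := buildD u vm.toList x [] y [] with hddef
      refine ⟨FreeMonoid.ofList (d.filterMap sumR), ⟨d, ⟨?_, ⟨x, c2⟩, ⟨y, c3⟩⟩, rfl⟩, ?_⟩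
      · rw [hddef, c1]
        exact hvm
      · rw [twoTapeHom_toList]
        have e1 : (d.filterMap sumR).filterMap sumL = x := by
          rw [List.filterMap_filterMap, FE1, ← List.filterMap_filterMap, c2,
            encode_filterMap_sumR]
        have e2 : (d.filterMap sumR).filterMap sumR = y := by
          rw [List.filterMap_filterMap, FE2, ← List.filterMap_filterMap, c3,
            encode_filterMap_sumR]
        have : (FreeMonoid.ofList (d.filterMap sumR) : FreeMonoid (B ⊕ B)).toList
            = d.filterMap sumR := rfl
        rw [this, e1, e2, Prod.mk.injEq]
        exact ⟨(FreeMonoid.ofList_toList _), (FreeMonoid.ofList_toList _)⟩
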